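/- (Gilbert–Varshamov lower bound for HF codes.) Let q ≥ 2, n ≥ 1 and d ≥ 1 be integers, and set S_max = max_{a ∈ C_{q,n}} Σ_{r=0}^{d−1} |H_r(a)|. Then there exists an HF code C ⊆ C_{q,n} in which any two distinct codewords have Hamming distance at least d and |C| ≥ ⌈ q(q−1)^{n−1} / S_max ⌉. -/

import Mathlib

open scoped Classical

/-- A sequence `a` of length `n` over an alphabet of size `q` is homopolymer free (HF)
if no two consecutive symbols are equal. -/
def isHF {q n : ℕ} (a : Fin n → Fin q) : Prop :=
  ∀ i : ℕ, ∀ h : i + 1 < n, a ⟨i, by omega⟩ ≠ a ⟨i + 1, h⟩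

/-- `HFset q n` is the set `C_{q,n}` of all HF sequences of length `n`. -/
noncomputable def HFset (q n : ℕ) : Finset (Fin n → Fin q) :=
  Finset.univ.filter isHF

lemma hf_restrict {q n : ℕ} (a : Fin (n+1) → Fin q) (ha : isHF a) :
    isHF (a ∘ Fin.castSucc) := by
  intro i h
  exact ha i (by omega)

lemma card_step {q n : ℕ} (hn : 1 ≤ n) :
    (HFset q (n+1)).card = (HFset q n).card * (q - 1) := by
  rw [Finset.card_eq_sum_card_fiberwise
    (f := fun a : Fin (n+1) → Fin q => a ∘ Fin.castSucc) (t := HFset q n)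
    (fun a ha => by
      simp only [Finset.mem_coe, HFset, Finset.mem_filter, Finset.mem_univ, true_and] at ha ⊢
      exact hf_restrict a ha)]
  rw [Finset.sum_congr rfl (fun b hb => ?_), Finset.sum_const, smul_eq_mul]
  simp only [HFset, Finset.mem_filter, Finset.mem_univ, true_and] at hb
  -- fiber over b has card q - 1
  have : ((HFset q (n+1)).filter (fun a => a ∘ Fin.castSucc = b)).card
      = (Finset.univ.filter (fun x : Fin q => x ≠ b ⟨n-1, by omega⟩)).card := by
    apply Finset.card_bij (fun a _ => a (Fin.last n))
    · intro a ha
      simp only [Finset.mem_filter, Finset.mem_univ, true_and, HFset] at ha ⊢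
      obtain ⟨ha1, ha2⟩ := ha
      have h1 : a ⟨n-1, by omega⟩ ≠ a ⟨n, by omega⟩ := by
        have := ha1 (n-1) (by omega)
        have e : n - 1 + 1 = n := by omega
        convert this using 3 <;> omega
      have : b ⟨n-1, by omega⟩ = a ⟨n-1, by omega⟩ := by
        rw [← ha2]; rfl
      rw [this]
      have : Fin.last n = ⟨n, by omega⟩ := rfl
      rw [this]
      exact fun hc => h1 hc.symm
    · intro a1 h1 a2 h2 he
      simp only [Finset.mem_filter] at h1 h2
      funext i
      induction i using Fin.lastCases with
      | last => exact he
      | cast j =>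
        have e1 : a1 (Fin.castSucc j) = b j := congrFun h1.2 j
        have e2 : a2 (Fin.castSucc j) = b j := congrFun h2.2 j
        rw [e1, e2]
    · intro x hx
      refine ⟨Fin.snoc b x, ?_, ?_⟩
      · simp only [Finset.mem_filter, Finset.mem_univ, true_and, HFset]
        constructor
        · intro i h
          rcases Nat.lt_or_ge (i+1) n with h2 | h2
          · have e1 : (⟨i, by omega⟩ : Fin (n+1)) = Fin.castSucc ⟨i, by omega⟩ := rfl
            have e2 : (⟨i+1, h⟩ : Fin (n+1)) = Fin.castSucc ⟨i+1, h2⟩ := rfl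
            rw [e1, e2, Fin.snoc_castSucc, Fin.snoc_castSucc]
            exact hb i h2
          · have e3 : i + 1 = n := by omega
            have e1 : (⟨i, by omega⟩ : Fin (n+1)) = Fin.castSucc ⟨i, by omega⟩ := rfl
            have e2 : (⟨i+1, h⟩ : Fin (n+1)) = Fin.last n := by
              simp [Fin.last, Fin.ext_iff, e3]
            rw [e1, e2, Fin.snoc_castSucc, Fin.snoc_last]
            simp only [Finset.mem_filter, Finset.mem_univ, true_and] at hx
            have : (⟨i, by omega⟩ : Fin n) = ⟨n-1, by omega⟩ := by
              simp [Fin.ext_iff]; omega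
            rw [this]
            exact fun hc => hx hc.symm
        · funext j
          simp [Fin.snoc_castSucc]
      · simp
    done
  rw [this]
  have : (Finset.univ.filter (fun x : Fin q => x ≠ b ⟨n-1, by omega⟩)).card = q - 1 := by
    rw [Finset.filter_ne']
    simp [Finset.card_erase_of_mem]
  rw [this]

lemma card_HFset (q n : ℕ) (hn : 1 ≤ n) :
    (HFset q n).card = q * (q - 1) ^ (n - 1) := by
  induction n with
  | zero => omega
  | succ m ih =>
    rcases Nat.eq_or_lt_of_le hn with h1 | h1
    · -- m = 0
      have hm : m = 0 := by omega
      subst hm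
      have : HFset q 1 = Finset.univ := by
        apply Finset.filter_true_of_mem
        intro a _ i h
        omega
      rw [this]
      simp [Finset.card_univ]
    · have hm : 1 ≤ m := by omega
      rw [card_step hm, ih hm]
      have : m + 1 - 1 = (m - 1) + 1 := by omega
      rw [this, pow_succ, mul_assoc]

/-- The HF sphere `H_r(a)`: all HF sequences at Hamming distance exactly `r` from `a`. -/
noncomputable def HFsphere {q n : ℕ} (a : Fin n → Fin q) (r : ℕ) :
    Finset (Fin n → Fin q) :=
  (HFset q n).filter (fun z => hammingDist a z = r)

/-- Gilbert–Varshamov lower bound for HF codes: `S_max` is the maximum over all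
`a ∈ C_{q,n}` of `Σ_{r=0}^{d−1} |H_r(a)|`, and there is an HF code with minimum
distance at least `d` of size at least `⌈q(q−1)^{n−1}/S_max⌉`. -/
theorem stmt_16 (q n d : ℕ) (hq : 2 ≤ q) (hn : 1 ≤ n) (hd : 1 ≤ d)
    (Smax : ℕ)
    (hSmax_le : ∀ a ∈ HFset q n,
      ∑ r ∈ Finset.range d, (HFsphere a r).card ≤ Smax)
    (hSmax_mem : ∃ a ∈ HFset q n,
      ∑ r ∈ Finset.range d, (HFsphere a r).card = Smax) :
    ∃ C : Finset (Fin n → Fin q), C ⊆ HFset q n ∧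
      (∀ c₁ ∈ C, ∀ c₂ ∈ C, c₁ ≠ c₂ → d ≤ hammingDist c₁ c₂) ∧
      ⌈((q : ℚ) * ((q : ℚ) - 1) ^ (n - 1)) / (Smax : ℚ)⌉ ≤ (C.card : ℤ) := by
  classical
  -- collection of valid codes
  set S : Finset (Finset (Fin n → Fin q)) :=
    (HFset q n).powerset.filter
      (fun C => ∀ c₁ ∈ C, ∀ c₂ ∈ C, c₁ ≠ c₂ → d ≤ hammingDist c₁ c₂) with hS
  have hempty : (∅ : Finset (Fin n → Fin q)) ∈ S := by
    simp [hS]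
  obtain ⟨C, hCS, hCmax⟩ := S.exists_max_image Finset.card ⟨∅, hempty⟩
  simp only [hS, Finset.mem_filter, Finset.mem_powerset] at hCS
  obtain ⟨hCsub, hCdist⟩ := hCS
  refine ⟨C, hCsub, hCdist, ?_⟩
  -- covering property
  have hcover : ∀ z ∈ HFset q n, ∃ c ∈ C, hammingDist c z < d := by
    intro z hz
    by_contra hcon
    push_neg at hcon
    have hzC : z ∉ C := fun hzC => by
      have := hcon z hzC
      simp [hammingDist_self] at this
      omega
    have hmem : insert z C ∈ S := by
      simp only [hS, Finset.mem_filter, Finset.mem_powerset]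
      refine ⟨Finset.insert_subset hz hCsub, ?_⟩
      intro c₁ h₁ c₂ h₂ hne
      rcases Finset.mem_insert.mp h₁ with h₁ | h₁ <;>
        rcases Finset.mem_insert.mp h₂ with h₂ | h₂
      · exact absurd (h₁.trans h₂.symm) hne
      · rw [h₁, hammingDist_comm]; exact hcon c₂ h₂
      · rw [h₂]; exact hcon c₁ h₁
      · exact hCdist c₁ h₁ c₂ h₂ hne
    have := hCmax _ hmem
    rw [Finset.card_insert_of_notMem hzC] at this
    omega
  -- counting
  have hsub : HFset q n ⊆ C.biUnion (fun c => (Finset.range d).biUnion (HFsphere c)) := by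
    intro z hz
    obtain ⟨c, hc, hlt⟩ := hcover z hz
    refine Finset.mem_biUnion.mpr ⟨c, hc, Finset.mem_biUnion.mpr
      ⟨hammingDist c z, Finset.mem_range.mpr hlt, ?_⟩⟩
    simp [HFsphere, Finset.mem_filter, hz]
  have hcount : (HFset q n).card ≤ C.card * Smax := by
    calc (HFset q n).card ≤ _ := Finset.card_le_card hsub
      _ ≤ ∑ c ∈ C, ((Finset.range d).biUnion (HFsphere c)).card :=
          Finset.card_biUnion_le
      _ ≤ ∑ c ∈ C, Smax := by
          refine Finset.sum_le_sum fun c hc => ?_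
          calc ((Finset.range d).biUnion (HFsphere c)).card
              ≤ ∑ r ∈ Finset.range d, (HFsphere c r).card := Finset.card_biUnion_le
            _ ≤ Smax := hSmax_le c (hCsub hc)
      _ = C.card * Smax := by rw [Finset.sum_const, smul_eq_mul]
  have hS1 : 1 ≤ Smax := by
    obtain ⟨a, haH, hsum⟩ := hSmax_mem
    have h0 : a ∈ HFsphere a 0 := by
      simp [HFsphere, Finset.mem_filter, haH, hammingDist_self]
    have : 1 ≤ (HFsphere a 0).card := Finset.card_pos.mpr ⟨a, h0⟩
    calc 1 ≤ (HFsphere a 0).card := this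
      _ ≤ ∑ r ∈ Finset.range d, (HFsphere a r).card :=
          Finset.single_le_sum (f := fun r => (HFsphere a r).card)
            (fun _ _ => Nat.zero_le _) (Finset.mem_range.mpr hd)
      _ = Smax := hsum
  -- final arithmetic
  have hN : ((HFset q n).card : ℚ) = (q : ℚ) * ((q : ℚ) - 1) ^ (n - 1) := by
    rw [card_HFset q n hn]
    push_cast [Nat.cast_sub (by omega : 1 ≤ q)]
    ring
  rw [Int.ceil_le, ← hN]
  have hSpos : (0 : ℚ) < (Smax : ℚ) := by exact_mod_cast hS1
  rw [div_le_iff₀ hSpos]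
  push_cast
  exact_mod_cast Nat.cast_le.mpr hcount
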